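/- Let x⁺, y⁺, x⁻, y⁻ ∈ ℝ^{n+2} (n ≥ 2) be vectors with q_{2,n}(x⁺) = q_{2,n}(y⁺) = q_{2,n}(x⁻) = q_{2,n}(y⁻) = 0, ⟨x⁻ | x⁺⟩ = ⟨x⁻ | y⁺⟩ = ⟨y⁻ | x⁺⟩ = ⟨y⁻ | y⁺⟩ = 0, ⟨x⁻ | y⁻⟩ < 0 and ⟨x⁺ | y⁺⟩ < 0 (representatives of the vertices of a crown). Then x⁺, y⁺, x⁻, y⁻ are linearly independent, and the restriction of q_{2,n} to their 4-dimensional span V is a nondegenerate quadratic form of signature (2,2): V admits an orthogonal basis e₁, e₂, e₃, e₄ with q_{2,n}(e₁) = q_{2,n}(e₂) = −1 and q_{2,n}(e₃) = q_{2,n}(e₄) = 1. -/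

import Mathlib

/-- The symmetric bilinear form associated to `q_{2,n}` on `ℝ × ℝ × ℝⁿ`
(coordinates `(u, v, x₁, …, xₙ)`). -/
def bilin (n : ℕ) (x y : ℝ × ℝ × (Fin n → ℝ)) : ℝ :=
  -(x.1 * y.1) - x.2.1 * y.2.1 + ∑ i, x.2.2 i * y.2.2 i

/-- The quadratic form `q_{2,n}(u,v,x₁,…,xₙ) = -u² - v² + x₁² + ⋯ + xₙ²`. -/
def quad (n : ℕ) (x : ℝ × ℝ × (Fin n → ℝ)) : ℝ := bilin n x x

lemma bilin_symm (n : ℕ) (x y : ℝ × ℝ × (Fin n → ℝ)) : bilin n x y = bilin n y x := by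
  simp [bilin, mul_comm]

lemma bilin_add_left (n : ℕ) (x y z : ℝ × ℝ × (Fin n → ℝ)) :
    bilin n (x + y) z = bilin n x z + bilin n y z := by
  simp [bilin, add_mul, Finset.sum_add_distrib]; ring

lemma bilin_smul_left (n : ℕ) (c : ℝ) (x z : ℝ × ℝ × (Fin n → ℝ)) :
    bilin n (c • x) z = c * bilin n x z := by
  simp only [bilin, Prod.smul_fst, Prod.smul_snd, Pi.smul_apply, smul_eq_mul, mul_assoc, ← Finset.mul_sum]; ring

lemma bilin_zero_left (n : ℕ) (z : ℝ × ℝ × (Fin n → ℝ)) : bilin n 0 z = 0 := by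
  simp [bilin]

lemma bilin_neg_left (n : ℕ) (x z : ℝ × ℝ × (Fin n → ℝ)) :
    bilin n (-x) z = -bilin n x z := by
  simpa using bilin_smul_left n (-1) x z

lemma bilin_neg_right (n : ℕ) (x z : ℝ × ℝ × (Fin n → ℝ)) :
    bilin n x (-z) = -bilin n x z := by
  rw [bilin_symm, bilin_neg_left, bilin_symm]

lemma bilin_add_right (n : ℕ) (x y z : ℝ × ℝ × (Fin n → ℝ)) :
    bilin n x (y + z) = bilin n x y + bilin n x z := by
  rw [bilin_symm, bilin_add_left, bilin_symm n y, bilin_symm n z]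

lemma bilin_smul_right (n : ℕ) (c : ℝ) (x z : ℝ × ℝ × (Fin n → ℝ)) :
    bilin n x (c • z) = c * bilin n x z := by
  rw [bilin_symm, bilin_smul_left, bilin_symm]

/-- Representatives of the vertices of a crown are linearly independent, and
`q_{2,n}` restricted to their span is nondegenerate of signature `(2,2)`:
the span admits an orthogonal basis `e₁, e₂, e₃, e₄` with
`q(e₁) = q(e₂) = −1` and `q(e₃) = q(e₄) = 1`. -/
theorem stmt14 (n : ℕ) (hn : 2 ≤ n)
    (xp yp xm ym : ℝ × ℝ × (Fin n → ℝ))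
    (hxp : quad n xp = 0) (hyp : quad n yp = 0)
    (hxm : quad n xm = 0) (hym : quad n ym = 0)
    (h1 : bilin n xm xp = 0) (h2 : bilin n xm yp = 0)
    (h3 : bilin n ym xp = 0) (h4 : bilin n ym yp = 0)
    (h5 : bilin n xm ym < 0) (h6 : bilin n xp yp < 0) :
    LinearIndependent ℝ ![xp, yp, xm, ym] ∧
    ∃ e : Fin 4 → ℝ × ℝ × (Fin n → ℝ),
      Submodule.span ℝ (Set.range e) =
        Submodule.span ℝ ({xp, yp, xm, ym} : Set (ℝ × ℝ × (Fin n → ℝ))) ∧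
      (∀ i j, i ≠ j → bilin n (e i) (e j) = 0) ∧
      quad n (e 0) = -1 ∧ quad n (e 1) = -1 ∧
      quad n (e 2) = 1 ∧ quad n (e 3) = 1 := by
  simp only [quad] at hxp hyp hxm hym
  set a := bilin n xp yp with ha
  set b := bilin n xm ym with hb
  have h1' : bilin n xp xm = 0 := by rw [bilin_symm]; exact h1
  have h2' : bilin n yp xm = 0 := by rw [bilin_symm]; exact h2
  have h3' : bilin n xp ym = 0 := by rw [bilin_symm]; exact h3
  have h4' : bilin n yp ym = 0 := by rw [bilin_symm]; exact h4
  have ha' : bilin n yp xp = a := by rw [bilin_symm]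
  have hb' : bilin n ym xm = b := by rw [bilin_symm]
  have hane : a ≠ 0 := ne_of_lt h6
  have hbne : b ≠ 0 := ne_of_lt h5
  set s := Real.sqrt (-(2*a)) with hsdef
  set t := Real.sqrt (-(2*b)) with htdef
  have hs : s * s = -(2*a) := Real.mul_self_sqrt (by linarith)
  have ht : t * t = -(2*b) := Real.mul_self_sqrt (by linarith)
  have hsne : s ≠ 0 := by
    intro h; rw [h] at hs; simp at hs; linarith
  have htne : t ≠ 0 := by
    intro h; rw [h] at ht; simp at ht; linarith
  set f0 := s⁻¹ • (xp + yp) with hf0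
  set f1 := t⁻¹ • (xm + ym) with hf1
  set f2 := s⁻¹ • (xp + (-1:ℝ) • yp) with hf2
  set f3 := t⁻¹ • (xm + (-1:ℝ) • ym) with hf3
  constructor
  · rw [Fintype.linearIndependent_iff]
    intro g hg
    rw [Fin.sum_univ_four] at hg
    simp only [Matrix.cons_val_zero, Matrix.cons_val_one, Matrix.head_cons,
      Matrix.cons_val_two, Matrix.tail_cons, Matrix.cons_val_three] at hg
    have c0 : g 0 * a = 0 := by
      have := congrArg (fun w => bilin n w yp) hg
      simpa [bilin_add_left, bilin_smul_left, bilin_zero_left, hxp, hyp, hxm, hym, h1, h2, h3, h4, h1', h2', h3', h4', ha', hb', ← ha, ← hb] using this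
    have c1 : g 1 * a = 0 := by
      have := congrArg (fun w => bilin n w xp) hg
      simpa [bilin_add_left, bilin_smul_left, bilin_zero_left, hxp, hyp, hxm, hym, h1, h2, h3, h4, h1', h2', h3', h4', ha', hb', ← ha, ← hb] using this
    have c2 : g 2 * b = 0 := by
      have := congrArg (fun w => bilin n w ym) hg
      simpa [bilin_add_left, bilin_smul_left, bilin_zero_left, hxp, hyp, hxm, hym, h1, h2, h3, h4, h1', h2', h3', h4', ha', hb', ← ha, ← hb] using this
    have c3 : g 3 * b = 0 := by
      have := congrArg (fun w => bilin n w xm) hg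
      simpa [bilin_add_left, bilin_smul_left, bilin_zero_left, hxp, hyp, hxm, hym, h1, h2, h3, h4, h1', h2', h3', h4', ha', hb', ← ha, ← hb] using this
    intro i
    fin_cases i
    · exact (mul_eq_zero.mp c0).resolve_right hane
    · exact (mul_eq_zero.mp c1).resolve_right hane
    · exact (mul_eq_zero.mp c2).resolve_right hbne
    · exact (mul_eq_zero.mp c3).resolve_right hbne
  · refine ⟨![f0, f1, f2, f3], ?_, ?_, ?_, ?_, ?_, ?_⟩
    · apply le_antisymm
      · rw [Submodule.span_le]
        have mxp : xp ∈ Submodule.span ℝ ({xp, yp, xm, ym} : Set (ℝ × ℝ × (Fin n → ℝ))) :=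
          Submodule.subset_span (by simp)
        have myp : yp ∈ Submodule.span ℝ ({xp, yp, xm, ym} : Set (ℝ × ℝ × (Fin n → ℝ))) :=
          Submodule.subset_span (by simp)
        have mxm : xm ∈ Submodule.span ℝ ({xp, yp, xm, ym} : Set (ℝ × ℝ × (Fin n → ℝ))) :=
          Submodule.subset_span (by simp)
        have mym : ym ∈ Submodule.span ℝ ({xp, yp, xm, ym} : Set (ℝ × ℝ × (Fin n → ℝ))) :=
          Submodule.subset_span (by simp)
        rintro _ ⟨i, rfl⟩
        fin_cases i
        · exact Submodule.smul_mem _ _ (Submodule.add_mem _ mxp myp)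
        · exact Submodule.smul_mem _ _ (Submodule.add_mem _ mxm mym)
        · exact Submodule.smul_mem _ _ (Submodule.add_mem _ mxp (Submodule.smul_mem _ _ myp))
        · exact Submodule.smul_mem _ _ (Submodule.add_mem _ mxm (Submodule.smul_mem _ _ mym))
      · rw [Submodule.span_le]
        have hxs : ((s/2) * s⁻¹) = (1/2 : ℝ) := by field_simp
        have hxt : ((t/2) * t⁻¹) = (1/2 : ℝ) := by field_simp
        have e0mem : f0 ∈ Submodule.span ℝ (Set.range ![f0, f1, f2, f3]) :=
          Submodule.subset_span ⟨0, rfl⟩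
        have e1mem : f1 ∈ Submodule.span ℝ (Set.range ![f0, f1, f2, f3]) :=
          Submodule.subset_span ⟨1, rfl⟩
        have e2mem : f2 ∈ Submodule.span ℝ (Set.range ![f0, f1, f2, f3]) :=
          Submodule.subset_span ⟨2, rfl⟩
        have e3mem : f3 ∈ Submodule.span ℝ (Set.range ![f0, f1, f2, f3]) :=
          Submodule.subset_span ⟨3, rfl⟩
        have hxp' : (s/2) • f0 + (s/2) • f2 = xp := by
          rw [hf0, hf2, smul_smul, smul_smul, hxs]; module
        have hyp' : (s/2) • f0 + (-(s/2)) • f2 = yp := by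
          rw [hf0, hf2, smul_smul, smul_smul, hxs, neg_mul, hxs]; module
        have hxm' : (t/2) • f1 + (t/2) • f3 = xm := by
          rw [hf1, hf3, smul_smul, smul_smul, hxt]; module
        have hym' : (t/2) • f1 + (-(t/2)) • f3 = ym := by
          rw [hf1, hf3, smul_smul, smul_smul, hxt, neg_mul, hxt]; module
        rintro x (rfl | rfl | rfl | rfl)
        · exact hxp' ▸ Submodule.add_mem _ (Submodule.smul_mem _ _ e0mem)
            (Submodule.smul_mem _ _ e2mem)
        · exact hyp' ▸ Submodule.add_mem _ (Submodule.smul_mem _ _ e0mem)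
            (Submodule.smul_mem _ _ e2mem)
        · exact hxm' ▸ Submodule.add_mem _ (Submodule.smul_mem _ _ e1mem)
            (Submodule.smul_mem _ _ e3mem)
        · exact hym' ▸ Submodule.add_mem _ (Submodule.smul_mem _ _ e1mem)
            (Submodule.smul_mem _ _ e3mem)
    · have k01 : bilin n f0 f1 = 0 := by
        simp [hf0, hf1, bilin_smul_left, bilin_smul_right, bilin_add_left, bilin_add_right, bilin_neg_left, bilin_neg_right, hxp, hyp, hxm, hym, h1, h2, h3, h4, h1', h2', h3', h4', ha', hb', ← ha, ← hb]
        try ring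
      have k02 : bilin n f0 f2 = 0 := by
        simp [hf0, hf2, bilin_smul_left, bilin_smul_right, bilin_add_left, bilin_add_right, bilin_neg_left, bilin_neg_right, hxp, hyp, hxm, hym, h1, h2, h3, h4, h1', h2', h3', h4', ha', hb', ← ha, ← hb]
        try ring
      have k03 : bilin n f0 f3 = 0 := by
        simp [hf0, hf3, bilin_smul_left, bilin_smul_right, bilin_add_left, bilin_add_right, bilin_neg_left, bilin_neg_right, hxp, hyp, hxm, hym, h1, h2, h3, h4, h1', h2', h3', h4', ha', hb', ← ha, ← hb]
        try ring
      have k12 : bilin n f1 f2 = 0 := by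
        simp [hf1, hf2, bilin_smul_left, bilin_smul_right, bilin_add_left, bilin_add_right, bilin_neg_left, bilin_neg_right, hxp, hyp, hxm, hym, h1, h2, h3, h4, h1', h2', h3', h4', ha', hb', ← ha, ← hb]
        try ring
      have k13 : bilin n f1 f3 = 0 := by
        simp [hf1, hf3, bilin_smul_left, bilin_smul_right, bilin_add_left, bilin_add_right, bilin_neg_left, bilin_neg_right, hxp, hyp, hxm, hym, h1, h2, h3, h4, h1', h2', h3', h4', ha', hb', ← ha, ← hb]
        try ring
      have k23 : bilin n f2 f3 = 0 := by
        simp [hf2, hf3, bilin_smul_left, bilin_smul_right, bilin_add_left, bilin_add_right, bilin_neg_left, bilin_neg_right, hxp, hyp, hxm, hym, h1, h2, h3, h4, h1', h2', h3', h4', ha', hb', ← ha, ← hb]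
        try ring
      intro i j hij
      fin_cases i <;> fin_cases j <;>
        first
          | exact absurd rfl hij
          | simpa using k01
          | simpa using k02
          | simpa using k03
          | simpa using k12
          | simpa using k13
          | simpa using k23
          | (rw [show (bilin n f1 f0 = bilin n f0 f1) from bilin_symm ..] <;> simpa using k01)
          | simpa [bilin_symm n f1 f0] using k01
          | simpa [bilin_symm n f2 f0] using k02
          | simpa [bilin_symm n f3 f0] using k03
          | simpa [bilin_symm n f2 f1] using k12
          | simpa [bilin_symm n f3 f1] using k13
          | simpa [bilin_symm n f3 f2] using k23
    · show quad n f0 = -1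
      simp only [quad, hf0, bilin_smul_left, bilin_smul_right, bilin_add_left,
        bilin_add_right, bilin_neg_left, bilin_neg_right, neg_smul, one_smul, hxp, hyp, ha', ← ha]
      field_simp
      first
        | linear_combination s * hs
        | linear_combination (-s) * hs
        | linarith [hs]
    · show quad n f1 = -1
      simp only [quad, hf1, bilin_smul_left, bilin_smul_right, bilin_add_left,
        bilin_add_right, bilin_neg_left, bilin_neg_right, neg_smul, one_smul, hxm, hym, hb', ← hb]
      field_simp
      first
        | linear_combination t * ht
        | linear_combination (-t) * ht
        | linarith [ht]
    · show quad n f2 = 1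
      simp only [quad, hf2, bilin_smul_left, bilin_smul_right, bilin_add_left,
        bilin_add_right, bilin_neg_left, bilin_neg_right, neg_smul, one_smul, hxp, hyp, ha', ← ha]
      field_simp
      first
        | linear_combination s * hs
        | linear_combination (-s) * hs
        | linarith [hs]
    · show quad n f3 = 1
      simp only [quad, hf3, bilin_smul_left, bilin_smul_right, bilin_add_left,
        bilin_add_right, bilin_neg_left, bilin_neg_right, neg_smul, one_smul, hxm, hym, hb', ← hb]
      field_simp
      first
        | linear_combination t * ht
        | linear_combination (-t) * ht
        | linarith [ht]
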